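/- Let R be a ring and suppose K is a class of R-modules closed under finite direct sums, pure submodules, isomorphisms, and pure epimorphic images. Then K is closed under pushouts of pure embeddings: if M, N₁, N₂ ∈ K and f₁ : M → N₁, f₂ : M → N₂ are pure embeddings, then the pushout P = (N₁ ⊕ N₂)/{(f₁(m), -f₂(m)) : m ∈ M} belongs to K. -/
import Mathlib


universe u v

/-- A submodule `A ≤ M` is pure if every finite system of `R`-linear equations with
parameters in `A` that is solvable in `M` is solvable in `A`. -/
def IsPureSubmodule (R : Type u) [Ring R] {M : Type v} [AddCommGroup M] [Module R M]
    (A : Submodule R M) : Prop :=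
  ∀ (k n : ℕ) (c : Fin k → Fin n → R) (a : Fin k → M),
    (∀ i, a i ∈ A) →
    (∃ x : Fin n → M, ∀ i, (∑ j, c i j • x j) = a i) →
    ∃ x : Fin n → M, (∀ j, x j ∈ A) ∧ ∀ i, (∑ j, c i j • x j) = a i

/-- A linear map is a pure embedding if it is injective and its range is a pure submodule. -/
def IsPureEmbedding (R : Type u) [Ring R] {M N : Type v} [AddCommGroup M] [Module R M]
    [AddCommGroup N] [Module R N] (f : M →ₗ[R] N) : Prop :=
  Function.Injective f ∧ IsPureSubmodule R (LinearMap.range f)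

/-- A module is pure-injective if it is a direct summand of every module containing it
as a pure submodule, i.e. every pure embedding out of it admits a retraction. -/
def IsPureInjective (R : Type u) [Ring R] (M : Type v) [AddCommGroup M] [Module R M] : Prop :=
  ∀ (N : Type v) [AddCommGroup N] [Module R N] (f : M →ₗ[R] N),
    IsPureEmbedding R f → ∃ g : N →ₗ[R] M, g ∘ₗ f = LinearMap.id

/-- A module is absolutely pure if it is pure in every module containing it. -/
def IsAbsolutelyPure (R : Type u) [Ring R] (M : Type v) [AddCommGroup M] [Module R M] : Prop :=
  ∀ (N : Type v) [AddCommGroup N] [Module R N] (f : M →ₗ[R] N),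
    Function.Injective f → IsPureSubmodule R (LinearMap.range f)

/-- a class of R-modules closed under finite direct sums, pure submodules,
isomorphisms and pure epimorphic images is closed under pushouts of pure embeddings. -/
theorem stmt3 (R : Type u) [Ring R]
    (K : (M : Type u) → [AddCommGroup M] → [Module R M] → Prop)
    (hsum : ∀ (M N : Type u) [AddCommGroup M] [Module R M] [AddCommGroup N] [Module R N],
      K M → K N → K (M × N))
    (hpure : ∀ (M : Type u) [AddCommGroup M] [Module R M] (A : Submodule R M),
      K M → IsPureSubmodule R A → K A)
    (hiso : ∀ (M N : Type u) [AddCommGroup M] [Module R M] [AddCommGroup N] [Module R N],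
      K M → (M ≃ₗ[R] N) → K N)
    (hepi : ∀ (M : Type u) [AddCommGroup M] [Module R M] (A : Submodule R M),
      K M → IsPureSubmodule R A → K (M ⧸ A))
    (M N₁ N₂ : Type u) [AddCommGroup M] [Module R M]
    [AddCommGroup N₁] [Module R N₁] [AddCommGroup N₂] [Module R N₂]
    (f₁ : M →ₗ[R] N₁) (f₂ : M →ₗ[R] N₂)
    (hf₁ : IsPureEmbedding R f₁) (hf₂ : IsPureEmbedding R f₂)
    (hM : K M) (hN₁ : K N₁) (hN₂ : K N₂) :
    K ((N₁ × N₂) ⧸ LinearMap.range (f₁.prod (-f₂))) := by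
  apply hepi (N₁ × N₂) _ (hsum _ _ hN₁ hN₂)
  intro k n c a ha hsol
  obtain ⟨x, hx⟩ := hsol
  choose m hm using ha
  have h1 : ∃ x' : Fin n → N₁, ∀ i, (∑ j, c i j • x' j) = f₁ (m i) := by
    refine ⟨fun j => (x j).1, fun i => ?_⟩
    have := congrArg Prod.fst (hx i)
    simpa [Prod.fst_sum, ← hm i] using this
  obtain ⟨x', hx'mem, hx'⟩ := hf₁.2 k n c (fun i => f₁ (m i)) (fun i => ⟨m i, rfl⟩) h1
  choose g hg using hx'mem
  refine ⟨fun j => (f₁.prod (-f₂)) (g j), fun j => ⟨g j, rfl⟩, fun i => ?_⟩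
  have hgeq : (∑ j, c i j • g j) = m i := by
    apply hf₁.1
    rw [map_sum]
    simpa [map_smul, hg] using hx' i
  calc (∑ j, c i j • (f₁.prod (-f₂)) (g j))
      = (f₁.prod (-f₂)) (∑ j, c i j • g j) := by rw [map_sum]; simp [map_smul]
    _ = a i := by rw [hgeq, hm i]
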